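/- arXiv:2601.03891 — 2 statements merged into one kernel-verified Lean document; each statement's English description precedes it below -/
import Mathlib

section
/- For every integer n ≥ 3, the strong domination number of the path P_n equals ⌈n/3⌉. -/
open SimpleGraph

/-- `D` is a strong dominating set of `G`: every vertex outside `D` has a neighbor
in `D` whose degree is at least its own. -/
def IsStrongDominating {V : Type*} (G : SimpleGraph V) (D : Set V) : Prop :=
  ∀ v ∉ D, ∃ u ∈ D, G.Adj v u ∧ (G.neighborSet v).ncard ≤ (G.neighborSet u).ncard

/-- The strong domination number. -/
noncomputable def gammaSt {V : Type*} (G : SimpleGraph V) : ℕ :=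
  sInf {n | ∃ D : Set V, D.Finite ∧ IsStrongDominating G D ∧ D.ncard = n}

/-- The stability of the strong domination number: the minimum size of a vertex set
whose removal changes the strong domination number. -/
noncomputable def stGammaSt {V : Type*} (G : SimpleGraph V) : ℕ :=
  sInf {n | ∃ S : Set V, S.Finite ∧ S.ncard = n ∧ gammaSt (G.induce Sᶜ) ≠ gammaSt G}

/-- The join of two graphs. -/
def joinG {V W : Type*} (G : SimpleGraph V) (H : SimpleGraph W) : SimpleGraph (V ⊕ W) :=
  SimpleGraph.fromRel (fun x y =>
    match x, y with
    | Sum.inl a, Sum.inl b => G.Adj a b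
    | Sum.inr a, Sum.inr b => H.Adj a b
    | _, _ => True)

/-- `n` disjoint copies of `K₂`. -/
def nK2 (n : ℕ) : SimpleGraph (Fin n × Fin 2) where
  Adj x y := x.1 = y.1 ∧ x.2 ≠ y.2
  symm := ⟨fun x y h => ⟨h.1.symm, h.2.symm⟩⟩
  loopless := ⟨fun x h => h.2 rfl⟩

/-- Every vertex of the path graph has degree at most 2. -/
lemma path_deg_le {n : ℕ} (v : Fin n) :
    ((pathGraph n).neighborSet v).ncard ≤ 2 := by
  have hinj : Function.Injective (Fin.val : Fin n → ℕ) := Fin.val_injective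
  rw [← Set.ncard_image_of_injective _ hinj]
  have hsub : (Fin.val '' (pathGraph n).neighborSet v) ⊆ ({v.val + 1, v.val - 1} : Set ℕ) := by
    rintro a ⟨w, hw, rfl⟩
    rw [SimpleGraph.mem_neighborSet, pathGraph_adj] at hw
    simp only [Set.mem_insert_iff, Set.mem_singleton_iff]
    omega
  calc (Fin.val '' (pathGraph n).neighborSet v).ncard
      ≤ ({v.val + 1, v.val - 1} : Set ℕ).ncard := Set.ncard_le_ncard hsub (Set.toFinite _)
    _ ≤ 2 := by
        refine le_trans (Set.ncard_insert_le _ _) ?_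
        simp

/-- Interior vertices of the path graph have degree exactly 2. -/
lemma path_deg_int {n : ℕ} (u : Fin n) (h1 : 0 < u.val) (h2 : u.val + 1 < n) :
    ((pathGraph n).neighborSet u).ncard = 2 := by
  have hinj : Function.Injective (Fin.val : Fin n → ℕ) := Fin.val_injective
  rw [← Set.ncard_image_of_injective _ hinj]
  have heq : (Fin.val '' (pathGraph n).neighborSet u) = ({u.val - 1, u.val + 1} : Set ℕ) := by
    ext a
    simp only [Set.mem_image, SimpleGraph.mem_neighborSet, pathGraph_adj,
      Set.mem_insert_iff, Set.mem_singleton_iff]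
    constructor
    · rintro ⟨w, hw, rfl⟩; omega
    · rintro (rfl | rfl)
      · exact ⟨⟨u.val - 1, by omega⟩, by simp only [Fin.val_mk]; omega, rfl⟩
      · exact ⟨⟨u.val + 1, h2⟩, Or.inl rfl, rfl⟩
  rw [heq, Set.ncard_pair (by omega)]

/-- An explicit optimal strong dominating set for the path graph. -/
def D0 (n : ℕ) : Set (Fin n) := {v | (v.val % 3 = 1 ∧ v.val + 3 ≤ n) ∨ v.val = n - 2}

lemma D0_ncard {n : ℕ} (hn : 3 ≤ n) : (D0 n).ncard = (n + 2) / 3 := by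
  classical
  set m := (n + 2) / 3 with hm
  have hD : D0 n =
      ↑((Finset.range m).image (fun k => (⟨min (3 * k + 1) (n - 2), by omega⟩ : Fin n))) := by
    ext v
    simp only [D0, Set.mem_setOf_eq, Finset.coe_image, Set.mem_image, Finset.mem_coe,
      Finset.mem_range]
    constructor
    · rintro (⟨h1, h2⟩ | h1)
      · refine ⟨v.val / 3, by omega, ?_⟩
        apply Fin.ext
        simp only [Fin.val_mk]
        omega
      · refine ⟨m - 1, by omega, ?_⟩
        apply Fin.ext
        simp only [Fin.val_mk]
        omega
    · rintro ⟨k, hk, rfl⟩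
      simp only [Fin.val_mk]
      omega
  rw [hD, Set.ncard_coe_finset]
  rw [Finset.card_image_of_injOn, Finset.card_range]
  intro k₁ h₁ k₂ h₂ he
  simp only [Finset.coe_range, Set.mem_Iio] at h₁ h₂
  have := congrArg Fin.val he
  simp only [Fin.val_mk] at this
  omega

lemma D0_strong {n : ℕ} (hn : 3 ≤ n) : IsStrongDominating (pathGraph n) (D0 n) := by
  intro v hv
  simp only [D0, Set.mem_setOf_eq] at hv
  push_neg at hv
  have hvlt : v.val < n := v.isLt
  have key : ∃ w : ℕ, ((w % 3 = 1 ∧ w + 3 ≤ n) ∨ w = n - 2) ∧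
      (v.val + 1 = w ∨ w + 1 = v.val) ∧ 0 < w ∧ w + 1 < n := by
    by_cases h0 : v.val % 3 = 0 ∧ v.val + 2 < n
    · exact ⟨v.val + 1, by omega, by omega, by omega, by omega⟩
    by_cases h2 : v.val % 3 = 2 ∧ v.val + 2 < n
    · exact ⟨v.val - 1, by omega, by omega, by omega, by omega⟩
    exact ⟨n - 2, by omega, by omega, by omega, by omega⟩
  obtain ⟨w, hwD, hwadj, hw0, hw1⟩ := key
  refine ⟨⟨w, by omega⟩, ?_, ?_, ?_⟩
  · simp only [D0, Set.mem_setOf_eq, Fin.val_mk]; exact hwD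
  · rw [pathGraph_adj]; simp only [Fin.val_mk]; exact hwadj
  · rw [path_deg_int ⟨w, by omega⟩ (by simpa using hw0) (by simpa using hw1)]
    exact path_deg_le v

lemma lower_bound {n : ℕ} (D : Set (Fin n)) (hD : IsStrongDominating (pathGraph n) D) :
    (n + 2) / 3 ≤ D.ncard := by
  classical
  have hchoice : ∀ v : Fin n, ∃ u : Fin n, u ∈ D ∧ (v = u ∨ (pathGraph n).Adj v u) := by
    intro v
    by_cases h : v ∈ D
    · exact ⟨v, h, Or.inl rfl⟩
    · obtain ⟨u, hu, hadj, _⟩ := hD v h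
      exact ⟨u, hu, Or.inr hadj⟩
  choose f hfD hfadj using hchoice
  have hmain : n ≤ 3 * D.ncard := by
    have h1 : (Finset.univ : Finset (Fin n)).card ≤ 3 * (Finset.univ.image f).card := by
      apply Finset.card_le_mul_card_image
      intro a _
      have hsub : (Finset.univ.filter (fun v => f v = a)).image Fin.val ⊆
          ({a.val - 1, a.val, a.val + 1} : Finset ℕ) := by
        intro x hx
        simp only [Finset.mem_image, Finset.mem_filter, Finset.mem_univ, true_and] at hx
        obtain ⟨v, hv, rfl⟩ := hx
        have := hfadj v
        rw [hv] at this
        rcases this with h | h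
        · simp [h]
        · rw [pathGraph_adj] at h
          simp only [Finset.mem_insert, Finset.mem_singleton]
          omega
      calc (Finset.univ.filter (fun v => f v = a)).card
          = ((Finset.univ.filter (fun v => f v = a)).image Fin.val).card :=
            (Finset.card_image_of_injective _ Fin.val_injective).symm
        _ ≤ ({a.val - 1, a.val, a.val + 1} : Finset ℕ).card := Finset.card_le_card hsub
        _ ≤ 3 := by
            refine le_trans (Finset.card_insert_le _ _) ?_
            refine Nat.succ_le_succ (le_trans (Finset.card_insert_le _ _) ?_)
            simp
    have h2 : (Finset.univ.image f) ⊆ D.toFinset := by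
      intro x hx
      simp only [Finset.mem_image, Finset.mem_univ, true_and] at hx
      obtain ⟨v, rfl⟩ := hx
      simpa using hfD v
    calc n = (Finset.univ : Finset (Fin n)).card := by simp
      _ ≤ 3 * (Finset.univ.image f).card := h1
      _ ≤ 3 * D.toFinset.card := Nat.mul_le_mul_left 3 (Finset.card_le_card h2)
      _ = 3 * D.ncard := by rw [Set.ncard_eq_toFinset_card']
  omega

theorem gammaSt_pathGraph (n : ℕ) (hn : 3 ≤ n) :
    gammaSt (pathGraph n) = (n + 2) / 3 := by
  have hmem : (n + 2) / 3 ∈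
      {k | ∃ D : Set (Fin n), D.Finite ∧ IsStrongDominating (pathGraph n) D ∧ D.ncard = k} :=
    ⟨D0 n, Set.toFinite _, D0_strong hn, D0_ncard hn⟩
  refine le_antisymm (Nat.sInf_le hmem) (le_csInf ⟨_, hmem⟩ ?_)
  rintro b ⟨D, -, hdom, rfl⟩
  exact lower_bound D hdom
end

section
/- For n ≡ 1 (mod 3), n ≥ 4, the stability of the strong domination number of the cycle C_n equals 1: deleting any single vertex changes γ_st from ⌈n/3⌉ to ⌈(n−1)/3⌉. -/
open SimpleGraph

lemma fin_add_val {n : ℕ} (v c : Fin n) :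
    (v + c).val = v.val + c.val ∨ ((v + c).val = v.val + c.val - n ∧ n ≤ v.val + c.val) := by
  have hv := v.isLt; have hc := c.isLt
  simp only [Fin.add_def]
  rcases Nat.lt_or_ge (v.val + c.val) n with hlt | hge
  · left; exact Nat.mod_eq_of_lt hlt
  · right; refine ⟨?_, hge⟩
    rw [Nat.mod_eq_sub_mod hge, Nat.mod_eq_of_lt (by omega)]

lemma fin_sub_val {n : ℕ} (x y : Fin n) :
    x.val = y.val + (x - y).val ∨ x.val + n = y.val + (x - y).val := by
  have hx := x.isLt; have hy := y.isLt
  simp only [Fin.sub_def]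
  rcases Nat.lt_or_ge (n - y.val + x.val) n with h | h
  · right; rw [Nat.mod_eq_of_lt h]; omega
  · left; rw [Nat.mod_eq_sub_mod h, Nat.mod_eq_of_lt (by omega)]; omega

lemma ncard_neighborSet_iso {V W : Type*} {G : SimpleGraph V} {H : SimpleGraph W}
    (e : G ≃g H) (v : V) :
    (H.neighborSet (e v)).ncard = (G.neighborSet v).ncard := by
  rw [← Nat.card_coe_set_eq, ← Nat.card_coe_set_eq]
  exact (Nat.card_congr (e.mapNeighborSet v)).symm

lemma isStrongDominating_image {V W : Type*} {G : SimpleGraph V} {H : SimpleGraph W}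
    (e : G ≃g H) {D : Set V} (h : IsStrongDominating G D) :
    IsStrongDominating H (⇑e '' D) := by
  intro v hv
  obtain ⟨u, hu, hadj, hdeg⟩ := h (e.symm v) (fun hm => hv ⟨_, hm, by simp⟩)
  refine ⟨e u, ⟨u, hu, rfl⟩, ?_, ?_⟩
  · have : H.Adj (e (e.symm v)) (e u) := e.map_adj_iff.mpr hadj
    simpa using this
  · have h1 := ncard_neighborSet_iso e (e.symm v)
    have h2 := ncard_neighborSet_iso e u
    simp only [RelIso.apply_symm_apply] at h1
    omega

lemma gammaSt_congr {V W : Type*} {G : SimpleGraph V} {H : SimpleGraph W} (e : G ≃g H) :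
    gammaSt G = gammaSt H := by
  unfold gammaSt
  congr 1
  ext m
  constructor
  · rintro ⟨D, hfin, hsd, rfl⟩
    exact ⟨⇑e '' D, hfin.image _, isStrongDominating_image e hsd,
      Set.ncard_image_of_injective _ (RelIso.injective e)⟩
  · rintro ⟨D, hfin, hsd, rfl⟩
    exact ⟨⇑e.symm '' D, hfin.image _, isStrongDominating_image e.symm hsd,
      Set.ncard_image_of_injective _ (RelIso.injective e.symm)⟩

lemma gammaSt_le {V : Type*} [Finite V] (G : SimpleGraph V) (D : Set V)
    (h : IsStrongDominating G D) : gammaSt G ≤ D.ncard := by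
  unfold gammaSt
  exact Nat.sInf_le ⟨D, Set.toFinite D, h, rfl⟩

lemma card_le_of_dom {V : Type*} [Fintype V] (G : SimpleGraph V) (D : Set V)
    (hdom : ∀ v ∉ D, ∃ u ∈ D, G.Adj v u)
    (hdeg : ∀ u : V, (G.neighborSet u).ncard ≤ 2) :
    Fintype.card V ≤ 3 * D.ncard := by
  classical
  have hsub : (Finset.univ : Finset V) ⊆
      D.toFinset.biUnion (fun u => insert u (G.neighborFinset u)) := by
    intro v _
    simp only [Finset.mem_biUnion, Set.mem_toFinset, Finset.mem_insert, mem_neighborFinset]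
    by_cases h : v ∈ D
    · exact ⟨v, h, Or.inl rfl⟩
    · obtain ⟨u, hu, hadj⟩ := hdom v h
      exact ⟨u, hu, Or.inr hadj.symm⟩
  calc Fintype.card V = (Finset.univ : Finset V).card := Finset.card_univ.symm
    _ ≤ (D.toFinset.biUnion (fun u => insert u (G.neighborFinset u))).card :=
        Finset.card_le_card hsub
    _ ≤ ∑ u ∈ D.toFinset, (insert u (G.neighborFinset u)).card := Finset.card_biUnion_le
    _ ≤ ∑ _u ∈ D.toFinset, 3 := Finset.sum_le_sum (fun u _ => by
        have h1 := Finset.card_insert_le u (G.neighborFinset u)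
        have h2 : (G.neighborFinset u).card = (G.neighborSet u).ncard :=
          (Set.ncard_eq_toFinset_card' _).symm
        have := hdeg u; omega)
    _ = 3 * D.ncard := by
        rw [Finset.sum_const, smul_eq_mul, Set.ncard_eq_toFinset_card']; ring

lemma three_mul_gammaSt {V : Type*} [Finite V] (G : SimpleGraph V)
    (hdeg : ∀ u : V, (G.neighborSet u).ncard ≤ 2) :
    Nat.card V ≤ 3 * gammaSt G := by
  classical
  have : Fintype V := Fintype.ofFinite V
  have hne : {m | ∃ D : Set V, D.Finite ∧ IsStrongDominating G D ∧ D.ncard = m}.Nonempty :=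
    ⟨_, Set.univ, Set.toFinite _, fun v hv => absurd (Set.mem_univ v) hv, rfl⟩
  obtain ⟨D, hfin, hsd, hcard⟩ := Nat.sInf_mem hne
  have hb := card_le_of_dom G D (fun v hv => by
      obtain ⟨u, hu, ha, _⟩ := hsd v hv; exact ⟨u, hu, ha⟩) hdeg
  rw [Nat.card_eq_fintype_card]
  calc Fintype.card V ≤ 3 * D.ncard := hb
    _ = 3 * gammaSt G := by rw [hcard]; rfl

lemma induce_deg_le {V : Type*} [Finite V] (G : SimpleGraph V) (s : Set V)
    (h2 : ∀ v : V, (G.neighborSet v).ncard ≤ 2) (u : s) :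
    ((G.induce s).neighborSet u).ncard ≤ 2 := by
  have hsub : Subtype.val '' ((G.induce s).neighborSet u) ⊆ G.neighborSet ↑u := by
    rintro x ⟨y, hy, rfl⟩
    exact hy
  calc ((G.induce s).neighborSet u).ncard
      = (Subtype.val '' ((G.induce s).neighborSet u)).ncard :=
        (Set.ncard_image_of_injective _ Subtype.coe_injective).symm
    _ ≤ (G.neighborSet ↑u).ncard := Set.ncard_le_ncard hsub (Set.toFinite _)
    _ ≤ 2 := h2 _

lemma cyc_deg {n : ℕ} (hn : 3 ≤ n) (v : Fin n) :
    ((cycleGraph n).neighborSet v).ncard = 2 := by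
  obtain ⟨m, rfl⟩ : ∃ m, n = m + 3 := ⟨n - 3, by omega⟩
  rw [show (cycleGraph (m + 3)).neighborSet v = {v - 1, v + 1} from cycleGraph_neighborSet]
  refine Set.ncard_pair ?_
  intro h
  have hone : (1 : Fin (m+3)).val = 1 := Fin.val_one _
  have hsub := fin_sub_val v 1
  have hadd := fin_add_val v 1
  have hv := v.isLt
  have h1 := (v - 1).isLt
  have h2 := (v + 1).isLt
  have heq : (v - 1).val = (v + 1).val := congrArg Fin.val h
  omega

lemma fin_add_sub_cancel' {n : ℕ} [NeZero n] (v w : Fin n) : v + (w - v) = w := by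
  abel

lemma cyc_adj_shift {n : ℕ} [NeZero n] (hn : 2 ≤ n) (v : Fin n) {c1 c2 : Fin n}
    (h : c2.val = c1.val + 1) : (cycleGraph n).Adj (v + c1) (v + c2) := by
  rw [cycleGraph_adj']
  right
  have hd : v + c2 - (v + c1) = c2 - c1 := by abel
  rw [hd]
  obtain ⟨d, hd2⟩ : ∃ d, c2 - c1 = d := ⟨_, rfl⟩
  have hf := fin_sub_val c2 c1
  rw [hd2] at hf ⊢
  have := d.isLt; have := c1.isLt; have := c2.isLt
  omega

theorem stGammaSt_cycleGraph_one (n : ℕ) (hn : 4 ≤ n) (hmod : n % 3 = 1) :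
    stGammaSt (cycleGraph n) = 1 ∧
    gammaSt (cycleGraph n) = (n + 2) / 3 ∧
    ∀ v : Fin n, gammaSt ((cycleGraph n).induce {v}ᶜ) = (n - 1 + 2) / 3 := by
  have : NeZero n := ⟨by omega⟩
  obtain ⟨k, hk⟩ : ∃ k, n = 3 * k + 1 := ⟨n / 3, by omega⟩
  have hk1 : 1 ≤ k := by omega
  have hdeg2 : ∀ v : Fin n, ((cycleGraph n).neighborSet v).ncard = 2 :=
    fun v => cyc_deg (by omega) v
  -- gammaSt of the cycle
  have hC : gammaSt (cycleGraph n) = k + 1 := by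
    have hle : gammaSt (cycleGraph n) ≤ k + 1 := by
      set f : Fin (k + 1) → Fin n := fun i => ⟨3 * i.val, by have := i.isLt; omega⟩ with hf
      have hfinj : Function.Injective f := by
        intro i j hij
        have := congrArg Fin.val hij
        simp only [hf] at this
        exact Fin.ext (by omega)
      have hsd : IsStrongDominating (cycleGraph n) (Set.range f) := by
        intro v hv
        have hv3 : v.val % 3 ≠ 0 := by
          intro h
          exact hv ⟨⟨v.val / 3, by have := v.isLt; omega⟩, Fin.ext (by simp [hf]; omega)⟩
        have hvlt := v.isLt
        by_cases h1 : v.val % 3 = 1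
        · refine ⟨⟨v.val - 1, by omega⟩,
            ⟨⟨(v.val - 1) / 3, by omega⟩, Fin.ext (by simp [hf]; omega)⟩, ?_, ?_⟩
          · rw [cycleGraph_adj']
            left
            have hs := fin_sub_val v (⟨v.val - 1, by omega⟩ : Fin n)
            have := (v - (⟨v.val - 1, by omega⟩ : Fin n)).isLt
            simp only at hs ⊢
            omega
          · rw [hdeg2, hdeg2]
        · have h2 : v.val % 3 = 2 := by omega
          refine ⟨⟨v.val + 1, by omega⟩,
            ⟨⟨(v.val + 1) / 3, by omega⟩, Fin.ext (by simp [hf]; omega)⟩, ?_, ?_⟩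
          · rw [cycleGraph_adj']
            right
            have hs := fin_sub_val (⟨v.val + 1, by omega⟩ : Fin n) v
            have := ((⟨v.val + 1, by omega⟩ : Fin n) - v).isLt
            simp only at hs ⊢
            omega
          · rw [hdeg2, hdeg2]
      have hcard : (Set.range f).ncard = k + 1 := by
        rw [← Nat.card_coe_set_eq, Nat.card_range_of_injective hfinj,
          Nat.card_eq_fintype_card, Fintype.card_fin]
      exact (gammaSt_le _ _ hsd).trans_eq hcard
    have hge := three_mul_gammaSt (cycleGraph n) (fun u => (hdeg2 u).le)
    rw [Nat.card_eq_fintype_card, Fintype.card_fin] at hge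
    omega
  -- gammaSt of the path (cycle minus a vertex)
  have hP : ∀ v : Fin n, gammaSt ((cycleGraph n).induce {v}ᶜ) = k := by
    intro v
    set s : Set (Fin n) := {v}ᶜ with hs
    have hmem : ∀ c : Fin n, c.val ≠ 0 → v + c ∈ s := by
      intro c hc
      simp only [hs, Set.mem_compl_iff, Set.mem_singleton_iff]
      intro h
      have := congrArg Fin.val h
      rcases fin_add_val v c with h' | h' <;>
        · have := v.isLt; have := c.isLt; omega
    have hdegle : ∀ u : ↥s, (((cycleGraph n).induce s).neighborSet u).ncard ≤ 2 :=
      induce_deg_le _ _ (fun u => (hdeg2 u).le)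
    have hle : gammaSt ((cycleGraph n).induce s) ≤ k := by
      set off : Fin k → Fin n := fun i => ⟨3 * i.val + 2, by have := i.isLt; omega⟩ with hoff
      have hoffval : ∀ i : Fin k, (off i).val = 3 * i.val + 2 := fun i => rfl
      set g : Fin k → ↥s := fun i => ⟨v + off i, hmem _ (by rw [hoffval]; omega)⟩ with hg
      have hgval : ∀ i : Fin k, (g i : Fin n) = v + off i := fun i => rfl
      have hginj : Function.Injective g := by
        intro i j hij
        have h1 : v + off i = v + off j := congrArg Subtype.val hij
        have h2 := congrArg Fin.val (add_left_cancel h1)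
        rw [hoffval, hoffval] at h2
        exact Fin.ext (by omega)
      have hsd : IsStrongDominating ((cycleGraph n).induce s) (Set.range g) := by
        intro w hw
        have hwv : (w : Fin n) ≠ v := w.2
        obtain ⟨p, hp⟩ : ∃ p, ((w : Fin n) - v).val = p := ⟨_, rfl⟩
        have hplt := ((w : Fin n) - v).isLt
        rw [hp] at hplt
        have hp0 : p ≠ 0 := by
          intro h
          apply hwv
          rw [← fin_add_sub_cancel' v (w : Fin n),
            show (w : Fin n) - v = 0 from Fin.ext (by rw [hp, h]; rfl), add_zero]
        have hDval : ∀ i : Fin k, g i ≠ w := fun i h => hw ⟨i, h⟩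
        have hweq : ∀ c : Fin n, c.val = p → v + c = (w : Fin n) := by
          intro c hc
          rw [show c = (w : Fin n) - v from Fin.ext (by rw [hc, hp]),
            fin_add_sub_cancel']
        have hp2 : p % 3 ≠ 2 := by
          intro h2
          have hik : (p - 2) / 3 < k := by omega
          refine hDval ⟨(p - 2) / 3, hik⟩ (Subtype.ext ?_)
          rw [hgval]
          refine hweq _ ?_
          rw [hoffval]
          show 3 * ((p - 2) / 3) + 2 = p
          omega
        have key : ∀ i : Fin k, ((cycleGraph n).induce s).Adj w (g i) →
            ∃ u ∈ Set.range g, ((cycleGraph n).induce s).Adj w u ∧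
              (((cycleGraph n).induce s).neighborSet w).ncard ≤
                (((cycleGraph n).induce s).neighborSet u).ncard := by
          intro i hadj
          refine ⟨g i, ⟨i, rfl⟩, hadj, ?_⟩
          calc (((cycleGraph n).induce s).neighborSet w).ncard ≤ 2 := hdegle w
            _ ≤ (((cycleGraph n).induce s).neighborSet (g i)).ncard := by
                have hq := hoffval i
                have hilt := i.isLt
                set c1 : Fin n := ⟨3 * i.val + 1, by omega⟩ with hc1
                set c2 : Fin n := ⟨3 * i.val + 3, by omega⟩ with hc2
                set x1 : ↥s := ⟨v + c1, hmem _ (by simp [hc1])⟩ with hx1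
                set x2 : ↥s := ⟨v + c2, hmem _ (by simp [hc2])⟩ with hx2
                have hne12 : x1 ≠ x2 := by
                  intro h
                  have h1 : v + c1 = v + c2 := congrArg Subtype.val h
                  have h2 := congrArg Fin.val (add_left_cancel h1)
                  simp [hc1, hc2] at h2
                have hadj1 : ((cycleGraph n).induce s).Adj (g i) x1 := by
                  have := (cyc_adj_shift (by omega) v
                    (show (off i).val = c1.val + 1 by rw [hoffval])).symm
                  exact this
                have hadj2 : ((cycleGraph n).induce s).Adj (g i) x2 := by
                  have := cyc_adj_shift (n := n) (by omega) v
                    (show c2.val = (off i).val + 1 by rw [hoffval])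
                  exact this
                have hsub2 : ({x1, x2} : Set ↥s) ⊆
                    ((cycleGraph n).induce s).neighborSet (g i) := by
                  rintro x (rfl | rfl)
                  · exact hadj1
                  · exact hadj2
                calc (2 : ℕ) = ({x1, x2} : Set ↥s).ncard := (Set.ncard_pair hne12).symm
                  _ ≤ _ := Set.ncard_le_ncard hsub2 (Set.toFinite _)
        by_cases h1 : p % 3 = 1
        · -- dominator at offset p + 1
          have hik : (p - 1) / 3 < k := by omega
          set i : Fin k := ⟨(p - 1) / 3, hik⟩ with hi
          refine key i ?_
          have hv1 : (off i).val = ((w : Fin n) - v).val + 1 := by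
            rw [hoffval, hp, hi]
            show 3 * ((p - 1) / 3) + 2 = p + 1
            omega
          have := cyc_adj_shift (n := n) (by omega) v hv1
          rw [fin_add_sub_cancel'] at this
          exact this
        · have h0 : p % 3 = 0 := by omega
          have hik : (p - 3) / 3 < k := by omega
          set i : Fin k := ⟨(p - 3) / 3, hik⟩ with hi
          refine key i ?_
          have hv1 : ((w : Fin n) - v).val = (off i).val + 1 := by
            rw [hoffval, hp, hi]
            show p = 3 * ((p - 3) / 3) + 2 + 1
            omega
          have := (cyc_adj_shift (n := n) (by omega) v hv1).symm
          rw [fin_add_sub_cancel'] at this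
          exact this
      have hcard : (Set.range g).ncard = k := by
        rw [← Nat.card_coe_set_eq, Nat.card_range_of_injective hginj,
          Nat.card_eq_fintype_card, Fintype.card_fin]
      exact (gammaSt_le _ _ hsd).trans_eq hcard
    have hge := three_mul_gammaSt ((cycleGraph n).induce s) hdegle
    have hcardV : Nat.card ↥s = n - 1 := by
      rw [Nat.card_coe_set_eq, hs, Set.compl_eq_univ_diff,
        Set.ncard_diff_singleton_of_mem (Set.mem_univ v),
        Set.ncard_univ, Nat.card_eq_fintype_card, Fintype.card_fin]
    rw [hcardV] at hge
    omega
  refine ⟨?_, by rw [hC]; omega, fun v => by rw [hP v]; omega⟩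
  -- stability
  have h1mem : (1 : ℕ) ∈ {m | ∃ S : Set (Fin n), S.Finite ∧ S.ncard = m ∧
      gammaSt ((cycleGraph n).induce Sᶜ) ≠ gammaSt (cycleGraph n)} := by
    have hv0 : (0 : ℕ) < n := by omega
    refine ⟨{⟨0, hv0⟩}, Set.finite_singleton _, Set.ncard_singleton _, ?_⟩
    rw [hC, hP ⟨0, hv0⟩]
    omega
  have h0not : (0 : ℕ) ∉ {m | ∃ S : Set (Fin n), S.Finite ∧ S.ncard = m ∧
      gammaSt ((cycleGraph n).induce Sᶜ) ≠ gammaSt (cycleGraph n)} := by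
    rintro ⟨S, hfin, h0, hne⟩
    have hS : S = ∅ := (Set.ncard_eq_zero hfin).mp h0
    subst hS
    rw [Set.compl_empty] at hne
    exact hne (gammaSt_congr (induceUnivIso (cycleGraph n)))
  unfold stGammaSt
  have hinf := Nat.sInf_mem ⟨1, h1mem⟩
  have hle := Nat.sInf_le h1mem
  set m := sInf {m | ∃ S : Set (Fin n), S.Finite ∧ S.ncard = m ∧
      gammaSt ((cycleGraph n).induce Sᶜ) ≠ gammaSt (cycleGraph n)} with hm
  rcases Nat.eq_zero_or_pos m with h | h
  · exact absurd (h ▸ hinf) h0not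
  · omega
end
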